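/- Let Ȳ ∈ ℝ^{n×m}, P ∈ ℝ^{n×k}, Q ∈ ℝ^{m×k} with k ≥ m, n. If (Ȳ − PQᵀ)Q = 0 and (Ȳ − PQᵀ)ᵀP = 0, then there exist an SVD Ȳ − PQᵀ = ΨΣΦᵀ and orthogonal matrices Γ_P, Γ_Q such that P = ΨΣ_PΓ_Pᵀ and Q = ΦΣ_QΓ_Qᵀ are SVDs of P and Q with ΣΣ_Q = 0 and ΣᵀΣ_P = 0. -/

import Mathlib

open Matrix

/-- A real square matrix is orthogonal. -/
def IsOrth {n : ℕ} (M : Matrix (Fin n) (Fin n) ℝ) : Prop := Mᵀ * M = 1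

/-- A rectangular diagonal matrix with nonnegative diagonal entries. -/
def IsRectDiag {p o : ℕ} (S : Matrix (Fin p) (Fin o) ℝ) : Prop :=
  (∀ (i : Fin p) (j : Fin o), (i : ℕ) ≠ (j : ℕ) → S i j = 0) ∧ ∀ i j, 0 ≤ S i j

lemma spec0 {n : ℕ} (A : Matrix (Fin n) (Fin n) ℝ) (hA : Aᵀ = A) :
    ∃ (U : Matrix (Fin n) (Fin n) ℝ) (d : Fin n → ℝ),
      Uᵀ * U = 1 ∧ A = U * diagonal d * Uᵀ := by
  have hA' : A.IsHermitian := by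
    rw [Matrix.IsHermitian, conjTranspose]
    ext i j; simpa using congrFun (congrFun hA i) j
  refine ⟨(hA'.eigenvectorUnitary : Matrix (Fin n) (Fin n) ℝ), hA'.eigenvalues, ?_, ?_⟩
  · have := (Matrix.mem_unitaryGroup_iff').mp (hA'.eigenvectorUnitary).2
    -- star U * U = 1 ; star = conjTranspose = transpose over ℝ
    simpa [star, conjTranspose] using this
  · have := hA'.spectral_theorem
    simpa [star, conjTranspose] using this


lemma perm0 {n : ℕ} (p : Fin n → Prop) [DecidablePred p] :
    ∃ (σ : Equiv.Perm (Fin n)) (r : ℕ), r = Fintype.card {i // p i} ∧ r ≤ n ∧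
      ∀ i : Fin n, p (σ i) ↔ (i : ℕ) < r := by
  set r := Fintype.card {i // p i} with hr
  have hrn : r ≤ n := by
    simpa using Fintype.card_subtype_le p
  have hc : Fintype.card {i // ¬ p i} = n - r := by
    simp [Fintype.card_subtype_compl, hr]
  have hn : n = r + (n - r) := by omega
  let e1 : Fin r ≃ {i // p i} := (Fintype.equivFinOfCardEq hr.symm).symm
  let e2 : Fin (n - r) ≃ {i // ¬ p i} := (Fintype.equivFinOfCardEq hc).symm
  let σ : Equiv.Perm (Fin n) :=
    ((finCongr hn).trans finSumFinEquiv.symm).trans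
      ((e1.sumCongr e2).trans (Equiv.sumCompl p))
  refine ⟨σ, r, rfl, hrn, fun i => ?_⟩
  by_cases h : (i : ℕ) < r
  · have hj : finSumFinEquiv.symm (finCongr hn i) = Sum.inl ⟨(i : ℕ), h⟩ := by
      rw [Equiv.symm_apply_eq]
      ext
      simp
    simp only [σ, Equiv.trans_apply, hj, Equiv.sumCongr_apply, Sum.map_inl,
      Equiv.sumCompl_apply_inl]
    exact iff_of_true (e1 ⟨(i : ℕ), h⟩).2 h
  · have h' : r ≤ (i : ℕ) := le_of_not_gt h
    have hlt : (i : ℕ) - r < n - r := by omega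
    have hj : finSumFinEquiv.symm (finCongr hn i) = Sum.inr ⟨(i : ℕ) - r, hlt⟩ := by
      rw [Equiv.symm_apply_eq]
      ext
      simp
      omega
    simp only [σ, Equiv.trans_apply, hj, Equiv.sumCongr_apply, Sum.map_inr,
      Equiv.sumCompl_apply_inr]
    exact iff_of_false (e2 ⟨_, hlt⟩).2 h


lemma spec1 {n : ℕ} (A : Matrix (Fin n) (Fin n) ℝ) (hA : Aᵀ = A) :
    ∃ (U : Matrix (Fin n) (Fin n) ℝ) (d : Fin n → ℝ) (r : ℕ),
      Uᵀ * U = 1 ∧ A = U * diagonal d * Uᵀ ∧ r ≤ n ∧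
      (∀ i : Fin n, 0 < d i ↔ (i : ℕ) < r) ∧ r = Fintype.card {i // 0 < d i} := by
  classical
  obtain ⟨U, d, hU, hAd⟩ := spec0 A hA
  obtain ⟨σ, r, hrc, hrn, hσ⟩ := perm0 (fun i => 0 < d i)
  refine ⟨U.submatrix id σ, d ∘ σ, r, ?_, ?_, hrn, hσ, ?_⟩
  · have : (U.submatrix id σ)ᵀ = Uᵀ.submatrix σ id := by
      ext i j; simp [transpose_apply, submatrix_apply]
    rw [this,
      show Uᵀ.submatrix ⇑σ id = Uᵀ.submatrix ⇑σ ⇑(Equiv.refl (Fin n)) from rfl,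
      show U.submatrix id ⇑σ = U.submatrix ⇑(Equiv.refl (Fin n)) ⇑σ from rfl,
      submatrix_mul_equiv, hU]
    exact submatrix_one_equiv σ
  · have h1 : diagonal (d ∘ σ) = (diagonal d).submatrix σ σ := by
      ext i j
      by_cases h : i = j
      · subst h; simp
      · simp [diagonal_apply_ne _ h, diagonal_apply_ne _ (fun hc => h (σ.injective hc)),
          submatrix_apply, h]
    have h2 : (U.submatrix id σ)ᵀ = Uᵀ.submatrix σ id := by
      ext i j; simp [transpose_apply, submatrix_apply]
    rw [h1, h2]
    rw [show U.submatrix id ⇑σ = U.submatrix ⇑(Equiv.refl (Fin n)) ⇑σ from rfl,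
      show Uᵀ.submatrix ⇑σ id = Uᵀ.submatrix ⇑σ ⇑(Equiv.refl (Fin n)) from rfl,
      submatrix_mul_equiv, submatrix_mul_equiv, ← hAd]
    rfl
  · rw [hrc]
    exact Fintype.card_congr (σ.subtypeEquiv (fun i => by simp)).symm


lemma split0 {a b c : ℕ} (X : Matrix (Fin a) (Fin c) ℝ) (Z : Matrix (Fin b) (Fin c) ℝ)
    (d : Fin c → ℝ) (hd : Xᵀ * X - Zᵀ * Z = diagonal d) (hcross : X * Zᵀ = 0) :
    Xᵀ * X = diagonal (fun i => max (d i) 0) := by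
  set M := Xᵀ * X with hM
  set N := Zᵀ * Z with hN
  have hMsym : Mᵀ = M := by rw [hM, transpose_mul, transpose_transpose]
  have hNsym : Nᵀ = N := by rw [hN, transpose_mul, transpose_transpose]
  have hMN : M * N = 0 := by
    rw [hM, hN, Matrix.mul_assoc, ← Matrix.mul_assoc X, hcross, Matrix.zero_mul,
      Matrix.mul_zero]
  have hNM : N * M = 0 := by
    have hzx : Z * Xᵀ = 0 := by
      have := congrArg transpose hcross
      rwa [transpose_mul, transpose_transpose, transpose_zero] at this
    rw [hM, hN, Matrix.mul_assoc, ← Matrix.mul_assoc Z, hzx, Matrix.zero_mul,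
      Matrix.mul_zero]
  have hMdiag : M = diagonal d + N := by
    rw [← hd]; abel
  have hM2 : M * M = M * diagonal d := by
    have h1 : M * (M - N) = M * M - M * N := mul_sub M M N
    rw [hd, hMN, sub_zero] at h1
    rw [h1]
  have hN2 : N * N = -(N * diagonal d) := by
    have h1 : N * (M - N) = N * M - N * N := mul_sub N M N
    rw [hd, hNM, zero_sub] at h1
    rw [h1, neg_neg]
  have hMjj : ∀ j, 0 ≤ M j j := by
    intro j
    rw [hM, mul_apply]
    exact Finset.sum_nonneg fun q _ => by
      simp only [transpose_apply]; exact mul_self_nonneg _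
  have hNjj : ∀ j, 0 ≤ N j j := by
    intro j
    rw [hN, mul_apply]
    exact Finset.sum_nonneg fun q _ => by
      simp only [transpose_apply]; exact mul_self_nonneg _
  have sumsq : ∀ (A : Matrix (Fin c) (Fin c) ℝ), Aᵀ = A → ∀ j,
      (A * A) j j = ∑ i, (A i j) ^ 2 := by
    intro A hA j
    rw [mul_apply]
    refine Finset.sum_congr rfl fun i _ => ?_
    have h2 : A j i = A i j := congrFun (congrFun hA i) j
    rw [h2]; ring
  have colzero : ∀ (A : Matrix (Fin c) (Fin c) ℝ), Aᵀ = A → ∀ j,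
      (A * A) j j ≤ 0 → ∀ i, A i j = 0 := by
    intro A hA j hle i
    rw [sumsq A hA j] at hle
    have hz : ∑ i, (A i j) ^ 2 = 0 :=
      le_antisymm hle (Finset.sum_nonneg fun i _ => sq_nonneg _)
    have := (Finset.sum_eq_zero_iff_of_nonneg (fun i _ => sq_nonneg (A i j))).mp hz
      i (Finset.mem_univ i)
    exact pow_eq_zero_iff (two_ne_zero) |>.mp this
  ext i j
  rcases lt_trichotomy (d j) 0 with hdj | hdj | hdj
  · -- d j < 0 : column j of M vanishes
    have hle : (M * M) j j ≤ 0 := by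
      rw [hM2, mul_diagonal]
      exact mul_nonpos_of_nonneg_of_nonpos (hMjj j) (le_of_lt hdj)
    rw [colzero M hMsym j hle i]
    by_cases h : i = j
    · subst h; simp [diagonal, max_eq_right (le_of_lt hdj)]
    · simp [diagonal_apply_ne _ h]
  · -- d j = 0
    have hcol : ∀ i, M i j = N i j := by
      intro i
      have h3 := congrFun (congrFun hMdiag i) j
      simp only [Matrix.add_apply] at h3
      rw [h3]
      by_cases h : i = j
      · subst h; simp [diagonal, hdj]
      · simp [diagonal_apply_ne _ h]
    have hle : (M * M) j j ≤ 0 := by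
      have h4 : (M * M) j j = (M * N) j j := by
        rw [mul_apply, mul_apply]
        exact Finset.sum_congr rfl fun l _ => by rw [hcol l]
      rw [h4, hMN]
      simp
    rw [colzero M hMsym j hle i]
    by_cases h : i = j
    · subst h; simp [diagonal, hdj]
    · simp [diagonal_apply_ne _ h]
  · -- 0 < d j : column j of N vanishes
    have hle : (N * N) j j ≤ 0 := by
      rw [hN2, Matrix.neg_apply, mul_diagonal]
      simp only [neg_nonpos]
      exact mul_nonneg (hNjj j) (le_of_lt hdj)
    have hNcol := colzero N hNsym j hle i
    have h3 := congrFun (congrFun hMdiag i) j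
    simp only [Matrix.add_apply, hNcol, add_zero] at h3
    rw [h3]
    by_cases h : i = j
    · subst h; simp [diagonal, max_eq_left (le_of_lt hdj)]
    · simp [diagonal_apply_ne _ h]


lemma card0 {a : ℕ} {ι : Type*} [Fintype ι] [DecidableEq ι] (C : Matrix (Fin a) ι ℝ)
    (h : Cᵀ * C = 1) : Fintype.card ι ≤ a := by
  have hinj : Function.Injective C.mulVecLin := by
    intro x y hxy
    have h1 : ∀ z : ι → ℝ, Cᵀ *ᵥ (C *ᵥ z) = z := by
      intro z
      rw [mulVec_mulVec, h, one_mulVec]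
    have := congrArg (fun w => Cᵀ *ᵥ w) hxy
    simpa [mulVecLin_apply, h1] using this
  simpa using card_le_of_injective ℝ C.mulVecLin hinj


lemma card1 {a : ℕ} {ι : Type*} [Fintype ι] [DecidableEq ι] (r : ℕ)
    (X : Matrix (Fin a) ι ℝ) (hX : Xᵀ * X = 1)
    (h0 : ∀ i : Fin a, r ≤ (i : ℕ) → ∀ l, X i l = 0) : Fintype.card ι ≤ r := by
  rcases le_or_gt a r with har | hra
  · exact le_trans (card0 X hX) har
  · have hra' : r ≤ a := le_of_lt hra
    set C : Matrix (Fin r) ι ℝ := fun p l => X (Fin.castLE hra' p) l with hC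
    have hCC : Cᵀ * C = 1 := by
      ext l l'
      rw [← hX, mul_apply, mul_apply]
      simp only [transpose_apply]
      set g : ℕ → ℝ := fun q =>
        if hq : q < a then X ⟨q, hq⟩ l * X ⟨q, hq⟩ l' else 0 with hg
      have key : ∀ (s : ℕ) (hs : s ≤ a),
          (∑ p : Fin s, X (Fin.castLE hs p) l * X (Fin.castLE hs p) l')
          = ∑ q ∈ Finset.range s, g q := by
        intro s hs
        rw [← Fin.sum_univ_eq_sum_range g s]
        refine Finset.sum_congr rfl fun p _ => ?_
        have hpa : (p : ℕ) < a := lt_of_lt_of_le p.2 hs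
        simp only [hg]
        rw [dif_pos hpa]
        rfl
      have lhs_eq : (∑ p : Fin r, C p l * C p l')
          = ∑ q ∈ Finset.range r, g q := key r hra'
      have rhs_eq : (∑ i : Fin a, X i l * X i l')
          = ∑ q ∈ Finset.range a, g q := by
        have := key a le_rfl
        simpa using this
      rw [lhs_eq, rhs_eq]
      apply Finset.sum_subset (Finset.range_subset_range.mpr hra')
      intro q hqa hqr
      have hq1 : q < a := Finset.mem_range.mp hqa
      have hq2 : r ≤ q := le_of_not_gt (fun hc => hqr (Finset.mem_range.mpr hc))
      simp only [hg]
      rw [dif_pos hq1, h0 ⟨q, hq1⟩ hq2, zero_mul]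
    exact card0 C hCC


lemma sumsq0 {ι : Type*} [Fintype ι] (f : ι → ℝ)
    (h : ∑ i, (f i) ^ 2 ≤ 0) : ∀ i, f i = 0 := by
  intro i
  have hz : ∑ i, (f i) ^ 2 = 0 :=
    le_antisymm h (Finset.sum_nonneg fun i _ => sq_nonneg _)
  have := (Finset.sum_eq_zero_iff_of_nonneg (fun i _ => sq_nonneg (f i))).mp hz
    i (Finset.mem_univ i)
  exact pow_eq_zero_iff (two_ne_zero) |>.mp this


lemma ext2 {c : ℕ} (w : Fin c → Fin c → ℝ) (p : Fin c → Prop) [DecidablePred p]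
    (hw : ∀ i j, p i → p j → w i ⬝ᵥ w j = if i = j then 1 else 0) :
    ∃ G : Matrix (Fin c) (Fin c) ℝ, Gᵀ * G = 1 ∧ ∀ j (_ : p j) (q : Fin c), G q j = w j q := by
  classical
  set W : Matrix (Fin c) (Fin c) ℝ := fun q j => if p j then w j q else 0 with hW
  set χ : Fin c → ℝ := fun j => if p j then 1 else 0 with hχ
  have h1 : Wᵀ * W = diagonal χ := by
    ext i j
    rw [mul_apply]
    simp only [transpose_apply]; simp only [hW]
    by_cases hi : p i
    · by_cases hj : p j
      · have : (∑ q, (if p i then w i q else 0) * (if p j then w j q else 0))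
            = w i ⬝ᵥ w j := by
          rw [dotProduct]
          exact Finset.sum_congr rfl fun q _ => by rw [if_pos hi, if_pos hj]
        rw [this, hw i j hi hj]
        by_cases h : i = j
        · subst h; simp [diagonal, hχ, hi]
        · simp [diagonal_apply_ne _ h, h]
      · simp only [if_neg hj, mul_zero, Finset.sum_const_zero]
        by_cases h : i = j
        · subst h; simp [diagonal, hχ, hj]
        · simp [diagonal_apply_ne _ h]
    · simp only [if_neg hi, zero_mul, Finset.sum_const_zero]
      by_cases h : i = j
      · subst h; simp [diagonal, hχ, hi]
      · simp [diagonal_apply_ne _ h]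
  have h2 : W * diagonal χ = W := by
    ext q j
    rw [mul_diagonal]
    simp only [hW, hχ]
    by_cases hj : p j
    · simp [hj]
    · simp [hj]
  have hKK : (W * Wᵀ) * (W * Wᵀ) = W * Wᵀ := by
    calc (W * Wᵀ) * (W * Wᵀ) = W * (Wᵀ * W) * Wᵀ := by
          rw [Matrix.mul_assoc, Matrix.mul_assoc, Matrix.mul_assoc]
      _ = W * diagonal χ * Wᵀ := by rw [h1]
      _ = W * Wᵀ := by rw [h2]
  set H : Matrix (Fin c) (Fin c) ℝ := 1 - W * Wᵀ with hHdef
  have hHsym : Hᵀ = H := by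
    rw [hHdef, transpose_sub, transpose_one, transpose_mul, transpose_transpose]
  have hHH : H * H = H := by
    rw [hHdef]
    rw [sub_mul, mul_sub, mul_sub, one_mul, mul_one, one_mul, hKK]
    abel
  obtain ⟨T, h, hTT, hHspec⟩ := spec0 H hHsym
  have hTT' : T * Tᵀ = 1 := mul_eq_one_comm.mp hTT
  have hdiagD : Tᵀ * H * T = diagonal h := by
    rw [hHspec]
    simp only [Matrix.mul_assoc]
    rw [hTT, Matrix.mul_one, ← Matrix.mul_assoc, hTT, Matrix.one_mul]
  have hDD : diagonal h * diagonal h = diagonal h := by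
    calc diagonal h * diagonal h = (Tᵀ * H * T) * (Tᵀ * H * T) := by rw [hdiagD]
      _ = Tᵀ * (H * (T * Tᵀ) * H) * T := by
          simp only [Matrix.mul_assoc]
      _ = Tᵀ * (H * H) * T := by rw [hTT', Matrix.mul_one, ← Matrix.mul_assoc]
      _ = Tᵀ * H * T := by rw [hHH, Matrix.mul_assoc]
      _ = diagonal h := hdiagD
  have hidem : ∀ i, h i = 0 ∨ h i = 1 := by
    intro i
    have h3 := congrFun (congrFun hDD i) i
    rw [diagonal_mul_diagonal] at h3
    simp only [diagonal_apply_eq, Pi.mul_apply] at h3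
    have h4 : h i * (h i - 1) = 0 := by rw [mul_sub, mul_one, h3, sub_self]
    rcases mul_eq_zero.mp h4 with h5 | h5
    · exact Or.inl h5
    · exact Or.inr (by linarith)
  -- counting
  set s := Fintype.card {j // p j} with hs
  set t := Fintype.card {i // h i = 1} with ht
  have htraceχ : trace (diagonal χ) = (s : ℝ) := by
    rw [trace_diagonal]
    simp only [hχ]
    rw [Finset.sum_boole]
    rw [hs, Fintype.card_subtype]
  have htraceh : trace (diagonal h) = (t : ℝ) := by
    rw [trace_diagonal]
    have : ∀ i ∈ Finset.univ, h i = if h i = 1 then (1:ℝ) else 0 := by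
      intro i _
      rcases hidem i with h5 | h5 <;> simp [h5]
    rw [Finset.sum_congr rfl this, Finset.sum_boole, ht, Fintype.card_subtype]
  have hst : s + t = c := by
    have e1 : trace H = (c : ℝ) - (s : ℝ) := by
      rw [hHdef, trace_sub, trace_one, trace_mul_comm, h1, htraceχ]
      simp
    have e2 : trace H = (t : ℝ) := by
      rw [hHspec, trace_mul_comm, ← Matrix.mul_assoc, hTT, Matrix.one_mul, htraceh]
    have : (s : ℝ) + (t : ℝ) = (c : ℝ) := by rw [e2] at e1; linarith
    exact_mod_cast this
  have hcards : Fintype.card {j // ¬ p j} = t := by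
    rw [Fintype.card_subtype_compl]
    simp only [Fintype.card_fin, ← hs]
    omega
  set β : {j // ¬ p j} ≃ {i // h i = 1} := Fintype.equivOfCardEq hcards with hβ
  -- key fact : columns of T with h = 1 are orthogonal to all w i with p i
  have hWT : ∀ a : Fin c, h a = 1 → ∀ i, (Wᵀ * T) i a = 0 := by
    intro a ha
    have hKT : (W * Wᵀ) * T = T * diagonal (fun x => 1 - h x) := by
      have e3 : H * T = T * diagonal h := by
        rw [hHspec, Matrix.mul_assoc, hTT, Matrix.mul_one]
      have e4 : diagonal (fun x => (1:ℝ) - h x) = 1 - diagonal h := by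
        ext x y
        by_cases hxy : x = y
        · subst hxy; simp [diagonal]
        · simp [diagonal_apply_ne _ hxy, one_apply_ne hxy]
      rw [e4, mul_sub, Matrix.mul_one]
      have e5 : (W * Wᵀ) * T = T - H * T := by
        rw [hHdef, sub_mul, Matrix.one_mul]
        abel
      rw [e5, e3]
    have e6 : ((Wᵀ * T)ᵀ * (Wᵀ * T)) a a = 0 := by
      have e7 : (Wᵀ * T)ᵀ * (Wᵀ * T) = Tᵀ * ((W * Wᵀ) * T) := by
        rw [transpose_mul, transpose_transpose]
        simp only [Matrix.mul_assoc]
      rw [e7, hKT, ← Matrix.mul_assoc, hTT, Matrix.one_mul, diagonal]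
      simp [ha]
    have e8 : ∑ i, ((Wᵀ * T) i a) ^ 2 ≤ 0 := by
      rw [mul_apply] at e6
      calc ∑ i, ((Wᵀ * T) i a) ^ 2
          = ∑ i, (Wᵀ * T)ᵀ a i * (Wᵀ * T) i a := by
            refine Finset.sum_congr rfl fun i _ => ?_
            rw [transpose_apply]; ring
        _ = 0 := e6
        _ ≤ 0 := le_refl 0
    exact sumsq0 _ e8
  -- build G
  refine ⟨fun q j => if hj : p j then w j q else T q (β ⟨j, hj⟩), ?_, ?_⟩
  · ext i j
    erw [mul_apply]
    simp only [transpose, of_apply]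
    by_cases hi : p i <;> by_cases hj : p j
    · have : (∑ q, (if h' : p i then w i q else T q (β ⟨i, h'⟩)) *
          (if h' : p j then w j q else T q (β ⟨j, h'⟩))) = w i ⬝ᵥ w j := by
        rw [dotProduct]
        exact Finset.sum_congr rfl fun q _ => by rw [dif_pos hi, dif_pos hj]
      rw [this, hw i j hi hj]
      by_cases h' : i = j
      · subst h'; simp
      · simp [h', one_apply_ne h']
    · have : (∑ q, (if h' : p i then w i q else T q (β ⟨i, h'⟩)) *
          (if h' : p j then w j q else T q (β ⟨j, h'⟩)))
          = (Wᵀ * T) i (β ⟨j, hj⟩) := by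
        rw [mul_apply]
        refine Finset.sum_congr rfl fun q _ => ?_
        rw [dif_pos hi, dif_neg hj]
        simp only [transpose_apply]; simp only [hW, if_pos hi]
      rw [this, hWT _ (β ⟨j, hj⟩).2 i]
      have h' : i ≠ j := fun hc => hj (hc ▸ hi)
      simp [one_apply_ne h']
    · have : (∑ q, (if h' : p i then w i q else T q (β ⟨i, h'⟩)) *
          (if h' : p j then w j q else T q (β ⟨j, h'⟩)))
          = (Wᵀ * T) j (β ⟨i, hi⟩) := by
        rw [mul_apply]
        refine Finset.sum_congr rfl fun q _ => ?_
        rw [dif_neg hi, dif_pos hj]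
        simp only [transpose_apply]; simp only [hW, if_pos hj]
        ring
      rw [this, hWT _ (β ⟨i, hi⟩).2 j]
      have h' : i ≠ j := fun hc => hi (hc ▸ hj)
      simp [one_apply_ne h']
    · have : (∑ q, (if h' : p i then w i q else T q (β ⟨i, h'⟩)) *
          (if h' : p j then w j q else T q (β ⟨j, h'⟩)))
          = (Tᵀ * T) (β ⟨i, hi⟩).1 (β ⟨j, hj⟩).1 := by
        rw [mul_apply]
        refine Finset.sum_congr rfl fun q _ => ?_
        rw [dif_neg hi, dif_neg hj]
        rfl
      rw [this, hTT]
      by_cases h' : i = j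
      · subst h'; simp
      · have hne : (β ⟨i, hi⟩).1 ≠ (β ⟨j, hj⟩).1 := by
          intro hc
          apply h'
          have := β.injective (Subtype.ext hc)
          exact congrArg Subtype.val this
        simp [one_apply_ne h', one_apply_ne hne]
  · intro j hj q
    simp [dif_pos hj]


lemma half {a c : ℕ} (hac : a ≤ c) (X : Matrix (Fin a) (Fin c) ℝ) (g : Fin a → ℝ)
    (hg : ∀ i, 0 ≤ g i) (h : X * Xᵀ = diagonal g) :
    ∃ (G : Matrix (Fin c) (Fin c) ℝ) (SS : Matrix (Fin a) (Fin c) ℝ),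
      Gᵀ * G = 1 ∧ X = SS * Gᵀ ∧
      (∀ i j, SS i j = if (i : ℕ) = (j : ℕ) then Real.sqrt (g i) else 0) := by
  classical
  have hrow : ∀ i i' : Fin a, ∑ q, X i q * X i' q = diagonal g i i' := by
    intro i i'
    rw [← h, mul_apply]
    exact Finset.sum_congr rfl fun q _ => by rw [transpose_apply]
  set p : Fin c → Prop := fun j => ∃ hj : (j : ℕ) < a, g ⟨(j : ℕ), hj⟩ ≠ 0 with hp
  set w : Fin c → Fin c → ℝ := fun j q =>
    if hj : (j : ℕ) < a then (Real.sqrt (g ⟨(j : ℕ), hj⟩))⁻¹ * X ⟨(j : ℕ), hj⟩ q else 0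
    with hwdef
  have hw : ∀ i j, p i → p j → w i ⬝ᵥ w j = if i = j then 1 else 0 := by
    intro i j hi hj
    obtain ⟨hia, hgi⟩ := hi
    obtain ⟨hja, hgj⟩ := hj
    have hgi' : 0 < g ⟨(i : ℕ), hia⟩ := lt_of_le_of_ne (hg _) (Ne.symm hgi)
    have hgj' : 0 < g ⟨(j : ℕ), hja⟩ := lt_of_le_of_ne (hg _) (Ne.symm hgj)
    have e1 : w i ⬝ᵥ w j = (Real.sqrt (g ⟨(i : ℕ), hia⟩))⁻¹
        * (Real.sqrt (g ⟨(j : ℕ), hja⟩))⁻¹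
        * diagonal g ⟨(i : ℕ), hia⟩ ⟨(j : ℕ), hja⟩ := by
      rw [← hrow, dotProduct, Finset.mul_sum]
      refine Finset.sum_congr rfl fun q _ => ?_
      simp only [hwdef, dif_pos hia, dif_pos hja]
      ring
    rw [e1]
    by_cases hij : i = j
    · subst hij
      simp only [diagonal_apply_eq, if_pos rfl, if_true]
      rw [← Real.sqrt_mul_self (le_of_lt hgi')]
      field_simp
      rw [Real.sq_sqrt (Real.sqrt_nonneg _)]
    · have hne : (⟨(i : ℕ), hia⟩ : Fin a) ≠ ⟨(j : ℕ), hja⟩ := by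
        intro hc
        injection hc with hval
        exact hij (Fin.ext hval)
      rw [diagonal_apply_ne _ hne, if_neg hij, mul_zero]
  obtain ⟨G, hG, hGcol⟩ := ext2 w p hw
  refine ⟨G, fun i j => if (i : ℕ) = (j : ℕ) then Real.sqrt (g i) else 0, hG, ?_, fun _ _ => rfl⟩
  ext i q
  erw [mul_apply]
  set ι : Fin c := ⟨(i : ℕ), lt_of_lt_of_le i.2 hac⟩ with hι
  have e2 : ∀ j ∈ (Finset.univ : Finset (Fin c)),
      (if (i : ℕ) = (j : ℕ) then Real.sqrt (g i) else 0) * Gᵀ j q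
      = if j = ι then Real.sqrt (g i) * G q j else 0 := by
    intro j _
    by_cases hj : j = ι
    · subst hj
      rw [if_pos rfl, if_pos rfl, transpose_apply]
    · have : (i : ℕ) ≠ (j : ℕ) := by
        intro hc
        exact hj (Fin.ext hc.symm)
      rw [if_neg this, zero_mul, if_neg hj]
  rw [Finset.sum_congr rfl e2, Finset.sum_ite_eq' Finset.univ ι]
  simp only [Finset.mem_univ, if_true]
  by_cases hgi : g i = 0
  · have hXrow : ∀ q, X i q = 0 := by
      apply sumsq0
      have := hrow i i
      rw [diagonal_apply_eq, hgi] at this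
      calc ∑ q, (X i q) ^ 2 = ∑ q, X i q * X i q := by
            refine Finset.sum_congr rfl fun q _ => by ring
        _ = 0 := this
        _ ≤ 0 := le_refl 0
    rw [hXrow q, hgi, Real.sqrt_zero, zero_mul]
  · have hpι : p ι := by
      refine ⟨i.2, ?_⟩
      have : (⟨((ι : Fin c) : ℕ), i.2⟩ : Fin a) = i := Fin.ext rfl
      rw [this]
      exact hgi
    rw [hGcol ι hpι q]
    simp only [hwdef]
    rw [dif_pos (show ((ι : Fin c) : ℕ) < a from i.2)]
    have hii : (⟨((ι : Fin c) : ℕ), i.2⟩ : Fin a) = i := Fin.ext rfl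
    rw [hii]
    have hsq : Real.sqrt (g i) ≠ 0 :=
      Real.sqrt_ne_zero'.mpr (lt_of_le_of_ne (hg i) (Ne.symm hgi))
    field_simp


lemma cardlt {m r : ℕ} (h : r ≤ m) : Fintype.card {j : Fin m // (j : ℕ) < r} = r := by
  have e : {j : Fin m // (j : ℕ) < r} ≃ Fin r :=
    ⟨fun x => ⟨x.1.1, x.2⟩, fun y => ⟨⟨y.1, lt_of_lt_of_le y.2 h⟩, y.2⟩,
      fun x => by ext; rfl, fun y => by ext; rfl⟩
  rw [Fintype.card_congr e, Fintype.card_fin]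

lemma invmul2 {x : ℝ} (hx : 0 < x) :
    (Real.sqrt x)⁻¹ * x = Real.sqrt x := by
  have hs : Real.sqrt x ≠ 0 := ne_of_gt (Real.sqrt_pos.mpr hx)
  rw [inv_mul_eq_div, div_eq_iff hs, Real.mul_self_sqrt (le_of_lt hx)]

lemma invsq {x : ℝ} (hx : 0 < x) :
    (Real.sqrt x)⁻¹ * (Real.sqrt x)⁻¹ * x = 1 := by
  rw [← mul_inv, Real.mul_self_sqrt (le_of_lt hx)]
  exact inv_mul_cancel₀ (ne_of_gt hx)

set_option maxHeartbeats 1000000 in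
theorem stmt16 {n m k : ℕ} (hkm : m ≤ k) (hkn : n ≤ k)
    (Y : Matrix (Fin n) (Fin m) ℝ)
    (P : Matrix (Fin n) (Fin k) ℝ) (Q : Matrix (Fin m) (Fin k) ℝ)
    (hfP : (Y - P * Qᵀ) * Q = 0) (hfQ : (Y - P * Qᵀ)ᵀ * P = 0) :
    ∃ (Psi : Matrix (Fin n) (Fin n) ℝ) (Phi : Matrix (Fin m) (Fin m) ℝ)
      (GP GQ : Matrix (Fin k) (Fin k) ℝ)
      (S : Matrix (Fin n) (Fin m) ℝ)
      (SP : Matrix (Fin n) (Fin k) ℝ) (SQ : Matrix (Fin m) (Fin k) ℝ),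
      IsOrth Psi ∧ IsOrth Phi ∧ IsOrth GP ∧ IsOrth GQ ∧
      IsRectDiag S ∧ IsRectDiag SP ∧ IsRectDiag SQ ∧
      Y - P * Qᵀ = Psi * S * Phiᵀ ∧ P = Psi * SP * GPᵀ ∧ Q = Phi * SQ * GQᵀ ∧
      S * SQ = 0 ∧ Sᵀ * SP = 0 := by
  classical
  set R : Matrix (Fin n) (Fin m) ℝ := Y - P * Qᵀ with hRdef
  clear_value R
  -- basic vanishing products
  have hQR : Qᵀ * Rᵀ = 0 := by
    have := congrArg transpose hfP
    rwa [transpose_mul, transpose_zero] at this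
  have hPR : Pᵀ * R = 0 := by
    have := congrArg transpose hfQ
    rwa [transpose_mul, transpose_transpose, transpose_zero] at this
  -- n-side spectral decomposition, sorted
  have hAsym : (R * Rᵀ - P * Pᵀ)ᵀ = R * Rᵀ - P * Pᵀ := by
    rw [transpose_sub, transpose_mul, transpose_mul, transpose_transpose,
      transpose_transpose]
  obtain ⟨Ψ, d, r, hΨ, hAd, hrn, hr, hrc⟩ := spec1 _ hAsym
  have hΨ' : Ψ * Ψᵀ = 1 := mul_eq_one_comm.mp hΨ
  -- m-side spectral decomposition
  have hBsym : (Rᵀ * R - Q * Qᵀ)ᵀ = Rᵀ * R - Q * Qᵀ := by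
    rw [transpose_sub, transpose_mul, transpose_mul, transpose_transpose,
      transpose_transpose]
  obtain ⟨V, e, hV, hBe⟩ := spec0 _ hBsym
  have hV' : V * Vᵀ = 1 := mul_eq_one_comm.mp hV
  -- splitting on the n-side
  have hdiff : (Rᵀ * Ψ)ᵀ * (Rᵀ * Ψ) - (Pᵀ * Ψ)ᵀ * (Pᵀ * Ψ) = diagonal d := by
    rw [transpose_mul, transpose_transpose, transpose_mul, transpose_transpose]
    have e1 : Ψᵀ * R * (Rᵀ * Ψ) - Ψᵀ * P * (Pᵀ * Ψ)
        = Ψᵀ * (R * Rᵀ - P * Pᵀ) * Ψ := by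
      rw [Matrix.mul_sub, Matrix.sub_mul]
      simp only [Matrix.mul_assoc]
    rw [e1, hAd]
    simp only [Matrix.mul_assoc]
    rw [hΨ, Matrix.mul_one, ← Matrix.mul_assoc, hΨ, Matrix.one_mul]
  have hRdp : (Rᵀ * Ψ)ᵀ * (Rᵀ * Ψ) = diagonal (fun i => max (d i) 0) :=
    split0 (Rᵀ * Ψ) (Pᵀ * Ψ) d hdiff
      (by rw [transpose_mul, transpose_transpose, Matrix.mul_assoc,
        ← Matrix.mul_assoc Ψ, hΨ', Matrix.one_mul, hfQ])
  have hPdm : (Pᵀ * Ψ)ᵀ * (Pᵀ * Ψ) = diagonal (fun i => max (-(d i)) 0) := by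
    have hdiff2 : (Pᵀ * Ψ)ᵀ * (Pᵀ * Ψ) - (Rᵀ * Ψ)ᵀ * (Rᵀ * Ψ)
        = diagonal (fun i => -(d i)) := by
      have := congrArg Neg.neg hdiff
      rw [neg_sub] at this
      rw [this]
      ext x y
      by_cases hxy : x = y
      · subst hxy; simp
      · simp [diagonal_apply_ne _ hxy]
    have := split0 (Pᵀ * Ψ) (Rᵀ * Ψ) (fun i => -(d i)) hdiff2
      (by rw [transpose_mul, transpose_transpose, Matrix.mul_assoc,
        ← Matrix.mul_assoc Ψ, hΨ', Matrix.one_mul, hPR])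
    exact this
  set dp : Fin n → ℝ := fun i => max (d i) 0 with hdp
  set dm : Fin n → ℝ := fun i => max (-(d i)) 0 with hdm
  -- splitting on the m-side
  have hdiffB : (R * V)ᵀ * (R * V) - (Qᵀ * V)ᵀ * (Qᵀ * V) = diagonal e := by
    rw [transpose_mul, transpose_mul, transpose_transpose]
    have e1 : Vᵀ * Rᵀ * (R * V) - Vᵀ * Q * (Qᵀ * V)
        = Vᵀ * (Rᵀ * R - Q * Qᵀ) * V := by
      rw [Matrix.mul_sub, Matrix.sub_mul]
      simp only [Matrix.mul_assoc]
    rw [e1, hBe]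
    simp only [Matrix.mul_assoc]
    rw [hV, Matrix.mul_one, ← Matrix.mul_assoc, hV, Matrix.one_mul]
  have hRep : (R * V)ᵀ * (R * V) = diagonal (fun l => max (e l) 0) :=
    split0 (R * V) (Qᵀ * V) e hdiffB
      (by rw [transpose_mul, transpose_transpose, Matrix.mul_assoc,
        ← Matrix.mul_assoc V, hV', Matrix.one_mul, hfP])
  have hQem : (Qᵀ * V)ᵀ * (Qᵀ * V) = diagonal (fun l => max (-(e l)) 0) := by
    have hdiffB2 : (Qᵀ * V)ᵀ * (Qᵀ * V) - (R * V)ᵀ * (R * V)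
        = diagonal (fun l => -(e l)) := by
      have := congrArg Neg.neg hdiffB
      rw [neg_sub] at this
      rw [this]
      ext x y
      by_cases hxy : x = y
      · subst hxy; simp
      · simp [diagonal_apply_ne _ hxy]
    exact split0 (Qᵀ * V) (R * V) (fun l => -(e l)) hdiffB2
      (by rw [transpose_mul, Matrix.mul_assoc,
        ← Matrix.mul_assoc V, hV', Matrix.one_mul, hQR])
  set ep : Fin m → ℝ := fun l => max (e l) 0 with hep
  set em : Fin m → ℝ := fun l => max (-(e l)) 0 with hem
  -- column-level facts
  have K1 : ∀ i i' : Fin n, (∑ q, (Rᵀ * Ψ) q i * (Rᵀ * Ψ) q i') = diagonal dp i i' := by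
    intro i i'
    rw [← hRdp, mul_apply]
    exact Finset.sum_congr rfl fun q _ => by rw [transpose_apply]
  have K2 : ∀ i : Fin n, ¬ 0 < d i → ∀ q, (Rᵀ * Ψ) q i = 0 := by
    intro i hi
    apply sumsq0
    have h1 := K1 i i
    rw [diagonal_apply_eq] at h1
    have h2 : dp i = 0 := by
      simp only [hdp]
      exact max_eq_right (le_of_not_gt hi)
    calc ∑ q, ((Rᵀ * Ψ) q i) ^ 2 = ∑ q, (Rᵀ * Ψ) q i * (Rᵀ * Ψ) q i := by
          exact Finset.sum_congr rfl fun q _ => by ring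
      _ = dp i := h1
      _ ≤ 0 := le_of_eq h2
  have K4 : ∀ l l' : Fin m, (∑ q, V q l * V q l') = (1 : Matrix (Fin m) (Fin m) ℝ) l l' := by
    intro l l'
    rw [← hV, mul_apply]
    exact Finset.sum_congr rfl fun q _ => by rw [transpose_apply]
  have K5 : ∀ l : Fin m, ¬ 0 < e l → ∀ q, (R * V) q l = 0 := by
    intro l hl
    apply sumsq0
    have h1 : (∑ q, (R * V) q l * (R * V) q l) = diagonal ep l l := by
      rw [← hRep, mul_apply]
      exact Finset.sum_congr rfl fun q _ => by rw [transpose_apply]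
    rw [diagonal_apply_eq] at h1
    have h2 : ep l = 0 := by
      simp only [hep]
      exact max_eq_right (le_of_not_gt hl)
    calc ∑ q, ((R * V) q l) ^ 2 = ∑ q, (R * V) q l * (R * V) q l := by
          exact Finset.sum_congr rfl fun q _ => by ring
      _ = ep l := h1
      _ ≤ 0 := le_of_eq h2
  have K6 : ∀ l l' : Fin m, (∑ q, (Qᵀ * V) q l * (Qᵀ * V) q l') = diagonal em l l' := by
    intro l l'
    rw [← hQem, mul_apply]
    exact Finset.sum_congr rfl fun q _ => by rw [transpose_apply]
  have K7 : ∀ (i : Fin n) (l : Fin m), ¬ 0 < e l →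
      (∑ q, (Rᵀ * Ψ) q i * V q l) = 0 := by
    intro i l hl
    have e1 : ((Rᵀ * Ψ)ᵀ * V) i l = ∑ q, (Rᵀ * Ψ) q i * V q l := by
      rw [mul_apply]
      exact Finset.sum_congr rfl fun q _ => by rw [transpose_apply]
    rw [← e1]
    have e2 : (Rᵀ * Ψ)ᵀ * V = Ψᵀ * (R * V) := by
      rw [transpose_mul, transpose_transpose, Matrix.mul_assoc]
    rw [e2, mul_apply]
    exact Finset.sum_eq_zero fun x _ => by rw [K5 l hl x, mul_zero]
  -- cardinality bounds
  have hrm : r ≤ m := by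
    set Xd : Matrix (Fin m) {i : Fin n // 0 < d i} ℝ :=
      fun q i => (Real.sqrt (d i.1))⁻¹ * (Rᵀ * Ψ) q i.1 with hXd
    have hXdo : Xdᵀ * Xd = 1 := by
      ext i i'
      rw [mul_apply]
      simp only [transpose_apply]; simp only [hXd]
      have e1 : (∑ q, (Real.sqrt (d i.1))⁻¹ * (Rᵀ * Ψ) q i.1 *
          ((Real.sqrt (d i'.1))⁻¹ * (Rᵀ * Ψ) q i'.1))
          = (Real.sqrt (d i.1))⁻¹ * (Real.sqrt (d i'.1))⁻¹ *
            ∑ q, (Rᵀ * Ψ) q i.1 * (Rᵀ * Ψ) q i'.1 := by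
        rw [Finset.mul_sum]
        exact Finset.sum_congr rfl fun q _ => by ring
      rw [e1, K1]
      by_cases hii : i = i'
      · subst hii
        rw [diagonal_apply_eq, one_apply_eq]
        have hdpi : dp i.1 = d i.1 := by
          simp only [hdp]
          exact max_eq_left (le_of_lt i.2)
        rw [hdpi]
        exact invsq i.2
      · have hne : i.1 ≠ i'.1 := fun hc => hii (Subtype.ext hc)
        rw [diagonal_apply_ne _ hne, mul_zero, one_apply_ne hii]
    have := card0 Xd hXdo
    rw [← hrc] at this
    exact le_trans this (le_refl m)
  have hcate : Fintype.card {l : Fin m // 0 < e l} ≤ r := by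
    set X3 : Matrix (Fin n) {l : Fin m // 0 < e l} ℝ :=
      fun q l => (Real.sqrt (e l.1))⁻¹ * (Ψᵀ * (R * V)) q l.1 with hX3
    have hgram : (Ψᵀ * (R * V))ᵀ * (Ψᵀ * (R * V)) = diagonal ep := by
      rw [transpose_mul, transpose_transpose, Matrix.mul_assoc,
        ← Matrix.mul_assoc Ψ Ψᵀ, hΨ', Matrix.one_mul, hRep]
    refine card1 r X3 ?_ ?_
    · ext l l'
      rw [mul_apply]
      simp only [transpose_apply]; simp only [hX3]
      have e1 : (∑ q, (Real.sqrt (e l.1))⁻¹ * (Ψᵀ * (R * V)) q l.1 *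
          ((Real.sqrt (e l'.1))⁻¹ * (Ψᵀ * (R * V)) q l'.1))
          = (Real.sqrt (e l.1))⁻¹ * (Real.sqrt (e l'.1))⁻¹ *
            ∑ q, (Ψᵀ * (R * V)) q l.1 * (Ψᵀ * (R * V)) q l'.1 := by
        rw [Finset.mul_sum]
        exact Finset.sum_congr rfl fun q _ => by ring
      have e2 : (∑ q, (Ψᵀ * (R * V)) q l.1 * (Ψᵀ * (R * V)) q l'.1)
          = diagonal ep l.1 l'.1 := by
        rw [← hgram, mul_apply]
        exact Finset.sum_congr rfl fun q _ => by rw [transpose_apply]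
      rw [e1, e2]
      by_cases hll : l = l'
      · subst hll
        rw [diagonal_apply_eq, one_apply_eq]
        have hepl : ep l.1 = e l.1 := by
          simp only [hep]
          exact max_eq_left (le_of_lt l.2)
        rw [hepl]
        exact invsq l.2
      · have hne : l.1 ≠ l'.1 := fun hc => hll (Subtype.ext hc)
        rw [diagonal_apply_ne _ hne, mul_zero, one_apply_ne hll]
    · intro i hi l
      simp only [hX3]
      have hzero : (Ψᵀ * (R * V)) i l.1 = 0 := by
        rw [← Matrix.mul_assoc, mul_apply]
        apply Finset.sum_eq_zero
        intro x _
        have e3 : (Ψᵀ * R) i x = (Rᵀ * Ψ) x i := by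
          rw [show (Ψᵀ * R) = (Rᵀ * Ψ)ᵀ by
            rw [transpose_mul, transpose_transpose]]
          rw [transpose_apply]
        rw [e3, K2 i (by rw [hr]; omega) x, zero_mul]
      rw [hzero, mul_zero]
  have hτ : Nonempty ({j : Fin m // ¬ ((j : ℕ) < r)} ↪ {l : Fin m // ¬ (0 < e l)}) := by
    apply Function.Embedding.nonempty_of_card_le
    rw [Fintype.card_subtype_compl, Fintype.card_subtype_compl, Fintype.card_fin,
      cardlt hrm]
    exact Nat.sub_le_sub_left hcate m
  obtain ⟨τ⟩ := hτ
  have K0 : ∀ i i' : Fin n, (∑ x, Ψ x i * Ψ x i') = (1 : Matrix (Fin n) (Fin n) ℝ) i i' := by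
    intro i i'
    rw [← hΨ, mul_apply]
    exact Finset.sum_congr rfl fun x _ => by rw [transpose_apply]
  have hdpos : ∀ (j : Fin m) (hj : (j : ℕ) < r),
      0 < d ⟨(j : ℕ), lt_of_lt_of_le hj hrn⟩ := by
    intro j hj
    rw [hr]
    exact hj
  -- the orthogonal matrix Φ
  set Φ : Matrix (Fin m) (Fin m) ℝ := fun q j =>
    if hj : (j : ℕ) < r then
      (Real.sqrt (d ⟨(j : ℕ), lt_of_lt_of_le hj hrn⟩))⁻¹ *
        (Rᵀ * Ψ) q ⟨(j : ℕ), lt_of_lt_of_le hj hrn⟩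
    else V q (τ ⟨j, hj⟩).1
    with hΦdef
  have hΦ : Φᵀ * Φ = 1 := by
    ext i j
    rw [mul_apply]
    simp only [transpose_apply]; simp only [hΦdef]
    by_cases hi : (i : ℕ) < r <;> by_cases hj : (j : ℕ) < r
    · simp only [dif_pos hi, dif_pos hj]
      set i' : Fin n := ⟨(i : ℕ), lt_of_lt_of_le hi hrn⟩ with hi'
      set j' : Fin n := ⟨(j : ℕ), lt_of_lt_of_le hj hrn⟩ with hj'
      have e1 : (∑ q, (Real.sqrt (d i'))⁻¹ * (Rᵀ * Ψ) q i' *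
          ((Real.sqrt (d j'))⁻¹ * (Rᵀ * Ψ) q j'))
          = (Real.sqrt (d i'))⁻¹ * (Real.sqrt (d j'))⁻¹ *
            ∑ q, (Rᵀ * Ψ) q i' * (Rᵀ * Ψ) q j' := by
        rw [Finset.mul_sum]
        exact Finset.sum_congr rfl fun q _ => by ring
      rw [e1, K1]
      by_cases hij : i = j
      · subst hij
        have hii' : i' = j' := rfl
        rw [← hii', diagonal_apply_eq, one_apply_eq]
        have hdpi : dp i' = d i' := max_eq_left (le_of_lt (hdpos i hi))
        rw [hdpi]
        exact invsq (hdpos i hi)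
      · have hne : i' ≠ j' := by
          intro hc
          injection hc with hval
          exact hij (Fin.ext hval)
        rw [diagonal_apply_ne _ hne, mul_zero, one_apply_ne hij]
    · simp only [dif_pos hi, dif_neg hj]
      set i' : Fin n := ⟨(i : ℕ), lt_of_lt_of_le hi hrn⟩ with hi'
      have e1 : (∑ q, (Real.sqrt (d i'))⁻¹ * (Rᵀ * Ψ) q i' * V q (τ ⟨j, hj⟩).1)
          = (Real.sqrt (d i'))⁻¹ * ∑ q, (Rᵀ * Ψ) q i' * V q (τ ⟨j, hj⟩).1 := by
        rw [Finset.mul_sum]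
        exact Finset.sum_congr rfl fun q _ => by ring
      rw [e1, K7 i' (τ ⟨j, hj⟩).1 (τ ⟨j, hj⟩).2, mul_zero]
      have hij : i ≠ j := by
        intro hc
        subst hc
        exact hj hi
      rw [one_apply_ne hij]
    · simp only [dif_neg hi, dif_pos hj]
      set j' : Fin n := ⟨(j : ℕ), lt_of_lt_of_le hj hrn⟩ with hj'
      have e1 : (∑ q, V q (τ ⟨i, hi⟩).1 * ((Real.sqrt (d j'))⁻¹ * (Rᵀ * Ψ) q j'))
          = (Real.sqrt (d j'))⁻¹ * ∑ q, (Rᵀ * Ψ) q j' * V q (τ ⟨i, hi⟩).1 := by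
        rw [Finset.mul_sum]
        exact Finset.sum_congr rfl fun q _ => by ring
      rw [e1, K7 j' (τ ⟨i, hi⟩).1 (τ ⟨i, hi⟩).2, mul_zero]
      have hij : i ≠ j := by
        intro hc
        subst hc
        exact hi hj
      rw [one_apply_ne hij]
    · simp only [dif_neg hi, dif_neg hj]
      rw [K4]
      by_cases hij : i = j
      · subst hij
        rw [one_apply_eq, one_apply_eq]
      · have hne : (τ ⟨i, hi⟩).1 ≠ (τ ⟨j, hj⟩).1 := by
          intro hc
          have h5 := τ.injective (Subtype.ext hc)
          injection h5 with hval
          exact hij hval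
        rw [one_apply_ne hij, one_apply_ne hne]
  have hΦ' : Φ * Φᵀ = 1 := mul_eq_one_comm.mp hΦ
  -- R * (Rᵀ * Ψ) = Ψ * diagonal dp
  have e0 : Ψᵀ * (R * Rᵀ) * Ψ = diagonal dp := by
    rw [← hRdp, transpose_mul, transpose_transpose]
    simp only [Matrix.mul_assoc]
  have hRRdiag : R * Rᵀ = Ψ * diagonal dp * Ψᵀ := by
    rw [← e0]
    simp only [Matrix.mul_assoc]
    rw [hΨ', Matrix.mul_one, ← Matrix.mul_assoc, ← Matrix.mul_assoc, hΨ',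
      Matrix.one_mul]
  have hRRΨ : R * (Rᵀ * Ψ) = Ψ * diagonal dp := by
    rw [← Matrix.mul_assoc, hRRdiag]
    simp only [Matrix.mul_assoc]
    rw [hΨ, Matrix.mul_one]
  -- the rectangular diagonal S
  set S : Matrix (Fin n) (Fin m) ℝ := fun i j =>
    if hj : (j : ℕ) < r then
      (if (i : ℕ) = (j : ℕ) then Real.sqrt (d ⟨(j : ℕ), lt_of_lt_of_le hj hrn⟩) else 0)
    else 0
    with hSdef
  have hRΦ : ∀ (q : Fin n) (j : Fin m), (R * Φ) q j =
      if hj : (j : ℕ) < r then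
        Real.sqrt (d ⟨(j : ℕ), lt_of_lt_of_le hj hrn⟩) * Ψ q ⟨(j : ℕ), lt_of_lt_of_le hj hrn⟩
      else 0 := by
    intro q j
    rw [mul_apply]
    by_cases hj : (j : ℕ) < r
    · simp only [hΦdef, dif_pos hj]
      set j' : Fin n := ⟨(j : ℕ), lt_of_lt_of_le hj hrn⟩ with hj'
      have e1 : (∑ x, R q x * ((Real.sqrt (d j'))⁻¹ * (Rᵀ * Ψ) x j'))
          = (Real.sqrt (d j'))⁻¹ * ∑ x, R q x * (Rᵀ * Ψ) x j' := by
        rw [Finset.mul_sum]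
        exact Finset.sum_congr rfl fun x _ => by ring
      have e2 : (∑ x, R q x * (Rᵀ * Ψ) x j') = (R * (Rᵀ * Ψ)) q j' := by
        rw [mul_apply]
      rw [e1, e2, hRRΨ, mul_diagonal]
      have hdpi : dp j' = d j' := max_eq_left (le_of_lt (hdpos j hj))
      rw [hdpi]
      have e3 : (Real.sqrt (d j'))⁻¹ * (Ψ q j' * d j')
          = ((Real.sqrt (d j'))⁻¹ * d j') * Ψ q j' := by ring
      rw [e3, invmul2 (hdpos j hj)]
    · simp only [hΦdef, dif_neg hj]
      have e2 : (∑ x, R q x * V x (τ ⟨j, hj⟩).1) = (R * V) q (τ ⟨j, hj⟩).1 := by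
        rw [mul_apply]
      rw [e2, K5 _ (τ ⟨j, hj⟩).2]
  have hS : Ψᵀ * R * Φ = S := by
    rw [Matrix.mul_assoc]
    ext i j
    rw [mul_apply]
    simp only [transpose_apply]
    by_cases hj : (j : ℕ) < r
    · set j' : Fin n := ⟨(j : ℕ), lt_of_lt_of_le hj hrn⟩ with hj'
      have e1 : ∀ x ∈ (Finset.univ : Finset (Fin n)), Ψ x i * (R * Φ) x j
          = Real.sqrt (d j') * (Ψ x i * Ψ x j') := by
        intro x _
        rw [hRΦ x j, dif_pos hj]
        ring
      rw [Finset.sum_congr rfl e1, ← Finset.mul_sum, K0 i j']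
      simp only [hSdef, dif_pos hj]
      by_cases hij : (i : ℕ) = (j : ℕ)
      · rw [if_pos hij]
        have h6 : i = j' := Fin.ext hij
        rw [h6, one_apply_eq, mul_one]
      · have hne : i ≠ j' := by
          intro hc
          exact hij (congrArg Fin.val hc)
        rw [one_apply_ne hne, mul_zero, if_neg hij]
    · have e1 : ∀ x ∈ (Finset.univ : Finset (Fin n)), Ψ x i * (R * Φ) x j = 0 := by
        intro x _
        rw [hRΦ x j, dif_neg hj, mul_zero]
      rw [Finset.sum_congr rfl e1, Finset.sum_const_zero]
      simp only [hSdef, dif_neg hj]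
  have hYS : R = Ψ * S * Φᵀ := by
    rw [← hS]
    simp only [Matrix.mul_assoc]
    rw [hΦ', Matrix.mul_one, ← Matrix.mul_assoc, hΨ', Matrix.one_mul]
  -- the eigenvalues of Q Qᵀ in the Φ basis
  set g : Fin m → ℝ := fun j =>
    if hj : (j : ℕ) < r then 0 else em (τ ⟨j, hj⟩).1 with hgdef
  have hgn : ∀ j, 0 ≤ g j := by
    intro j
    simp only [hgdef]
    by_cases hj : (j : ℕ) < r
    · rw [dif_pos hj]
    · rw [dif_neg hj]
      simp only [hem]
      exact le_max_right _ _
  -- columns of Qᵀ * Φ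
  have hQΦ : ∀ (q : Fin k) (j : Fin m), (Qᵀ * Φ) q j =
      if hj : (j : ℕ) < r then 0 else (Qᵀ * V) q (τ ⟨j, hj⟩).1 := by
    intro q j
    rw [mul_apply]
    by_cases hj : (j : ℕ) < r
    · simp only [hΦdef, dif_pos hj]
      set j' : Fin n := ⟨(j : ℕ), lt_of_lt_of_le hj hrn⟩ with hj'
      have e1 : (∑ x, Qᵀ q x * ((Real.sqrt (d j'))⁻¹ * (Rᵀ * Ψ) x j'))
          = (Real.sqrt (d j'))⁻¹ * ∑ x, Qᵀ q x * (Rᵀ * Ψ) x j' := by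
        rw [Finset.mul_sum]
        exact Finset.sum_congr rfl fun x _ => by ring
      have e2 : (∑ x, Qᵀ q x * (Rᵀ * Ψ) x j') = (Qᵀ * (Rᵀ * Ψ)) q j' := by
        rw [mul_apply]
      have e3 : Qᵀ * (Rᵀ * Ψ) = 0 := by
        rw [← Matrix.mul_assoc, hQR, Matrix.zero_mul]
      rw [e1, e2, e3]
      simp
    · simp only [hΦdef, dif_neg hj]
      rw [mul_apply]
  have hQgram : (Φᵀ * Q) * (Φᵀ * Q)ᵀ = diagonal g := by
    have htr : (Φᵀ * Q) * (Φᵀ * Q)ᵀ = (Qᵀ * Φ)ᵀ * (Qᵀ * Φ) := by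
      rw [transpose_mul, transpose_transpose, transpose_mul, transpose_transpose]
    rw [htr]
    ext i j
    rw [mul_apply]
    simp only [transpose_apply]
    by_cases hi : (i : ℕ) < r
    · have e1 : ∀ q ∈ (Finset.univ : Finset (Fin k)),
          (Qᵀ * Φ) q i * (Qᵀ * Φ) q j = 0 := by
        intro q _
        rw [hQΦ q i, dif_pos hi, zero_mul]
      rw [Finset.sum_congr rfl e1, Finset.sum_const_zero]
      by_cases hij : i = j
      · subst hij
        rw [diagonal_apply_eq]
        simp only [hgdef]
        rw [dif_pos hi]
      · rw [diagonal_apply_ne _ hij]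
    · by_cases hj : (j : ℕ) < r
      · have e1 : ∀ q ∈ (Finset.univ : Finset (Fin k)),
            (Qᵀ * Φ) q i * (Qᵀ * Φ) q j = 0 := by
          intro q _
          rw [hQΦ q j, dif_pos hj, mul_zero]
        rw [Finset.sum_congr rfl e1, Finset.sum_const_zero]
        have hij : i ≠ j := by
          intro hc
          subst hc
          exact hi hj
        rw [diagonal_apply_ne _ hij]
      · have e1 : ∀ q ∈ (Finset.univ : Finset (Fin k)),
            (Qᵀ * Φ) q i * (Qᵀ * Φ) q j
            = (Qᵀ * V) q (τ ⟨i, hi⟩).1 * (Qᵀ * V) q (τ ⟨j, hj⟩).1 := by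
          intro q _
          rw [hQΦ q i, hQΦ q j, dif_neg hi, dif_neg hj]
        rw [Finset.sum_congr rfl e1, K6]
        by_cases hij : i = j
        · subst hij
          rw [diagonal_apply_eq, diagonal_apply_eq]
          simp only [hgdef]
          rw [dif_neg hi]
        · have hne : (τ ⟨i, hi⟩).1 ≠ (τ ⟨j, hj⟩).1 := by
            intro hc
            have h5 := τ.injective (Subtype.ext hc)
            injection h5 with hval
            exact hij hval
          rw [diagonal_apply_ne _ hne, diagonal_apply_ne _ hij]
  obtain ⟨GQ, SQ, hGQ, hXQ, hSQf⟩ := half hkm (Φᵀ * Q) g hgn hQgram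
  have hQfact : Q = Φ * SQ * GQᵀ := by
    have e1 : Φ * (Φᵀ * Q) = Q := by
      rw [← Matrix.mul_assoc, hΦ', Matrix.one_mul]
    rw [← e1, hXQ, Matrix.mul_assoc]
  -- P side
  have hPgram : (Ψᵀ * P) * (Ψᵀ * P)ᵀ = diagonal dm := by
    have htr : (Ψᵀ * P) * (Ψᵀ * P)ᵀ = (Pᵀ * Ψ)ᵀ * (Pᵀ * Ψ) := by
      rw [transpose_mul, transpose_transpose, transpose_mul, transpose_transpose]
    rw [htr, hPdm]
  have hdmn : ∀ i, 0 ≤ dm i := by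
    intro i
    simp only [hdm]
    exact le_max_right _ _
  obtain ⟨GP, SP, hGP, hXP, hSPf⟩ := half hkn (Ψᵀ * P) dm hdmn hPgram
  have hPfact : P = Ψ * SP * GPᵀ := by
    have e1 : Ψ * (Ψᵀ * P) = P := by
      rw [← Matrix.mul_assoc, hΨ', Matrix.one_mul]
    rw [← e1, hXP, Matrix.mul_assoc]
  -- assemble
  refine ⟨Ψ, Φ, GP, GQ, S, SP, SQ, hΨ, hΦ, hGP, hGQ, ?_, ?_, ?_, ?_, hPfact, hQfact, ?_, ?_⟩
  · -- IsRectDiag S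
    constructor
    · intro i j hij
      simp only [hSdef]
      by_cases hj : (j : ℕ) < r
      · rw [dif_pos hj, if_neg hij]
      · rw [dif_neg hj]
    · intro i j
      simp only [hSdef]
      by_cases hj : (j : ℕ) < r
      · rw [dif_pos hj]
        by_cases hij : (i : ℕ) = (j : ℕ)
        · rw [if_pos hij]
          exact Real.sqrt_nonneg _
        · rw [if_neg hij]
      · rw [dif_neg hj]
  · -- IsRectDiag SP
    constructor
    · intro i j hij
      rw [hSPf i j, if_neg hij]
    · intro i j
      rw [hSPf i j]
      by_cases hij : (i : ℕ) = (j : ℕ)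
      · rw [if_pos hij]; exact Real.sqrt_nonneg _
      · rw [if_neg hij]
  · -- IsRectDiag SQ
    constructor
    · intro i j hij
      rw [hSQf i j, if_neg hij]
    · intro i j
      rw [hSQf i j]
      by_cases hij : (i : ℕ) = (j : ℕ)
      · rw [if_pos hij]; exact Real.sqrt_nonneg _
      · rw [if_neg hij]
  · -- Y - P Qᵀ = Ψ S Φᵀ
    exact hYS
  · -- S * SQ = 0
    ext i b
    rw [mul_apply, Matrix.zero_apply]
    apply Finset.sum_eq_zero
    intro j _
    by_cases hj : (j : ℕ) < r
    · have hSQ0 : SQ j b = 0 := by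
        rw [hSQf j b]
        have hgj : g j = 0 := by
          simp only [hgdef]
          rw [dif_pos hj]
        rw [hgj, Real.sqrt_zero, ite_self]
      rw [hSQ0, mul_zero]
    · have hS0 : S i j = 0 := by
        simp only [hSdef]
        rw [dif_neg hj]
      rw [hS0, zero_mul]
  · -- Sᵀ * SP = 0
    ext a b
    rw [mul_apply, Matrix.zero_apply]
    apply Finset.sum_eq_zero
    intro i _
    rw [transpose_apply]
    by_cases ha : (a : ℕ) < r
    · by_cases hia : (i : ℕ) = (a : ℕ)
      · have hSP0 : SP i b = 0 := by
          rw [hSPf i b]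
          have hdmi : dm i = 0 := by
            have hdi : 0 < d i := by
              rw [hr]
              omega
            simp only [hdm]
            exact max_eq_right (by linarith)
          rw [hdmi, Real.sqrt_zero, ite_self]
        rw [hSP0, mul_zero]
      · have hS0 : S i a = 0 := by
          simp only [hSdef]
          rw [dif_pos ha, if_neg hia]
        rw [hS0, zero_mul]
    · have hS0 : S i a = 0 := by
        simp only [hSdef]
        rw [dif_neg ha]
      rw [hS0, zero_mul]
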